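/- arXiv:math/0509429 — 5 statements merged into one kernel-verified Lean document; each statement's English description precedes it below -/
import Mathlib

section
/- Suppose Δ = {x ∈ (ℝ^n)^* : ⟨x,u_i⟩ ≥ λ_i, i=1,…,p} is bounded (a polytope). Then the map J_A := ι^* ∘ J_G : ℂ^p → L_ℝ^*, where J_G(z) = (1/2)(|z_1|²,…,|z_p|²) + λ and ι^* is restriction to L_ℝ = ker π, is a proper map: preimages of compact sets are compact. -/
open Finset Metric

lemma JA_polytope_bound {p n : ℕ} (u : Fin p → (Fin n → ℝ)) (lam : Fin p → ℝ)
    (hbdd : Bornology.IsBounded {x : Fin n → ℝ | ∀ i, lam i ≤ ∑ j, x j * u i j})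
    (hne : {x : Fin n → ℝ | ∀ i, lam i ≤ ∑ j, x j * u i j}.Nonempty)
    (mu : Fin p → ℝ) :
    ∃ C, 0 ≤ C ∧ ∀ x : Fin n → ℝ, (∀ i, mu i ≤ ∑ j, x j * u i j) → ‖x‖ ≤ C := by
  obtain ⟨x₀, hx₀⟩ := hne
  obtain ⟨R, hR⟩ := hbdd.exists_norm_le
  have hcone : ∀ d : Fin n → ℝ, (∀ i, 0 ≤ ∑ j, d j * u i j) → d = 0 := by
    intro d hd
    by_contra hd0
    have hdn : 0 < ‖d‖ := norm_pos_iff.mpr hd0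
    set t : ℝ := (R + ‖x₀‖ + 1) / ‖d‖ with ht
    have hRnn : 0 ≤ R := le_trans (norm_nonneg x₀) (hR x₀ hx₀)
    have htpos : 0 < t := div_pos (by positivity) hdn
    have hmem : (x₀ + t • d) ∈ {x : Fin n → ℝ | ∀ i, lam i ≤ ∑ j, x j * u i j} := by
      intro i
      have hsum : ∑ j, (x₀ + t • d) j * u i j
          = (∑ j, x₀ j * u i j) + t * ∑ j, d j * u i j := by
        rw [Finset.mul_sum, ← Finset.sum_add_distrib]
        refine Finset.sum_congr rfl fun j _ => ?_
        simp [Pi.add_apply, Pi.smul_apply, smul_eq_mul]; ring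
      rw [hsum]
      have := hx₀ i
      nlinarith [hd i, htpos.le, mul_nonneg htpos.le (hd i)]
    have h1 : ‖x₀ + t • d‖ ≤ R := hR _ hmem
    have h2 : ‖t • d‖ - ‖x₀‖ ≤ ‖x₀ + t • d‖ := by
      have := norm_add_le (x₀ + t • d) (-x₀)
      simp at this
      calc ‖t • d‖ - ‖x₀‖ ≤ ‖x₀ + t • d‖ + ‖x₀‖ - ‖x₀‖ := by
            have h3 : ‖t • d‖ = ‖(x₀ + t • d) + (-x₀)‖ := by ring_nf
            rw [h3]
            have := norm_add_le (x₀ + t • d) (-x₀)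
            simp only [norm_neg] at this
            linarith
        _ = ‖x₀ + t • d‖ := by ring
    have h4 : ‖t • d‖ = R + ‖x₀‖ + 1 := by
      rw [norm_smul, Real.norm_eq_abs, abs_of_pos htpos, ht, div_mul_cancel₀ _ hdn.ne']
    linarith
  rcases isEmpty_or_nonempty (Fin p) with hp | hp
  · refine ⟨0, le_refl 0, fun x _ => ?_⟩
    have : x = 0 := hcone x (fun i => hp.elim i)
    simp [this]
  · have hsph : ∃ ε > 0, ∀ d : Fin n → ℝ, ‖d‖ = 1 → ∃ i, ∑ j, d j * u i j ≤ -ε := by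
      rcases Set.eq_empty_or_nonempty (sphere (0 : Fin n → ℝ) 1) with hemp | hno
      · exact ⟨1, one_pos, fun d hd =>
          absurd (mem_sphere_zero_iff_norm.mpr hd) (by simp [hemp])⟩
      · set f : (Fin n → ℝ) → ℝ :=
          fun d => Finset.univ.inf' Finset.univ_nonempty (fun i => ∑ j, d j * u i j) with hf
        have hfc : Continuous f := by
          exact Continuous.finset_inf'_apply (f := fun (i : Fin p) (d : Fin n → ℝ) => ∑ j, d j * u i j)
            Finset.univ_nonempty fun i _ =>
            continuous_finset_sum _ fun j _ => (continuous_apply j).mul continuous_const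
        obtain ⟨d₀, hd₀, hmax⟩ :=
          (isCompact_sphere (0 : Fin n → ℝ) 1).exists_isMaxOn hno hfc.continuousOn
        have hd₀' : ‖d₀‖ = 1 := mem_sphere_zero_iff_norm.mp hd₀
        have hneg : f d₀ < 0 := by
          by_contra h
          push_neg at h
          have h0 : ∀ i, 0 ≤ ∑ j, d₀ j * u i j := fun i =>
            le_trans h (Finset.inf'_le _ (Finset.mem_univ i))
          have := hcone d₀ h0
          rw [this] at hd₀'
          simp at hd₀'
        refine ⟨-f d₀, by linarith, fun d hd => ?_⟩
        have hle : f d ≤ f d₀ := hmax (mem_sphere_zero_iff_norm.mpr hd)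
        obtain ⟨i, _, hi⟩ := Finset.exists_mem_eq_inf' Finset.univ_nonempty
          (fun i => ∑ j, d j * u i j)
        exact ⟨i, by rw [← hi]; linarith⟩
    obtain ⟨ε, hε, hkey⟩ := hsph
    refine ⟨max 0 ((∑ i, |mu i|) / ε), le_max_left _ _, fun x hx => ?_⟩
    rcases eq_or_ne x 0 with rfl | hx0
    · simp
    · have hxn : 0 < ‖x‖ := norm_pos_iff.mpr hx0
      obtain ⟨i, hi⟩ := hkey (‖x‖⁻¹ • x)
        (by rw [norm_smul, Real.norm_eq_abs, abs_of_nonneg (by positivity),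
            inv_mul_cancel₀ hxn.ne'])
      have h2 : ∑ j, (‖x‖⁻¹ • x) j * u i j = ‖x‖⁻¹ * ∑ j, x j * u i j := by
        rw [Finset.mul_sum]
        refine Finset.sum_congr rfl fun j _ => ?_
        simp [Pi.smul_apply, smul_eq_mul]; ring
      rw [h2] at hi
      have h3 : ∑ j, x j * u i j ≤ -ε * ‖x‖ := by
        have h := mul_le_mul_of_nonneg_left hi hxn.le
        rw [← mul_assoc, mul_inv_cancel₀ hxn.ne', one_mul] at h
        linarith [h]
      have h4 : ε * ‖x‖ ≤ -mu i := by linarith [hx i]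
      have h5 : -mu i ≤ ∑ i, |mu i| :=
        le_trans (neg_le_abs _) (Finset.single_le_sum (f := fun i => |mu i|) (fun i _ => abs_nonneg _)
          (Finset.mem_univ i))
      have h6 : ‖x‖ ≤ (∑ i, |mu i|) / ε := by
        rw [le_div_iff₀ hε]
        linarith
      exact le_trans h6 (le_max_right _ _)


def JA_L {p n : ℕ} (u : Fin p → (Fin n → ℝ)) : Submodule ℝ (EuclideanSpace ℝ (Fin p)) where
  carrier := {v | ∑ i, v i • u i = 0}
  add_mem' := by
    intro a b ha hb
    simp only [Set.mem_setOf_eq] at *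
    have : ∑ i, ((a + b) i) • u i = (∑ i, a i • u i) + ∑ i, b i • u i := by
      rw [← Finset.sum_add_distrib]
      exact Finset.sum_congr rfl fun i _ => by
        simp [PiLp.add_apply, add_smul]
    rw [this, ha, hb, add_zero]
  zero_mem' := by simp
  smul_mem' := by
    intro c a ha
    simp only [Set.mem_setOf_eq] at *
    have : ∑ i, ((c • a) i) • u i = c • ∑ i, a i • u i := by
      rw [Finset.smul_sum]
      exact Finset.sum_congr rfl fun i _ => by
        simp [PiLp.smul_apply, mul_smul]
    rw [this, ha, smul_zero]

noncomputable def JA_T {p n : ℕ} (u : Fin p → (Fin n → ℝ)) :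
    EuclideanSpace ℝ (Fin n) →ₗ[ℝ] EuclideanSpace ℝ (Fin p) where
  toFun x := (WithLp.equiv 2 (Fin p → ℝ)).symm (fun i => ∑ j, u i j * x j)
  map_add' x y := by
    ext i
    simp [Finset.sum_add_distrib, mul_add]
  map_smul' c x := by
    ext i
    simp [Finset.mul_sum, mul_left_comm]

lemma JA_T_apply {p n : ℕ} (u : Fin p → (Fin n → ℝ)) (x : EuclideanSpace ℝ (Fin n)) (i : Fin p) :
    JA_T u x i = ∑ j, u i j * x j := rfl

lemma JA_orth {p n : ℕ} (u : Fin p → (Fin n → ℝ)) :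
    (LinearMap.range (JA_T u))ᗮ = JA_L u := by
  have hswap : ∀ (x : EuclideanSpace ℝ (Fin n)) (v : EuclideanSpace ℝ (Fin p)),
      (inner ℝ (JA_T u x) v : ℝ) = ∑ j, x j * (∑ i, v i * u i j) := by
    intro x v
    rw [PiLp.inner_apply]
    simp only [RCLike.inner_apply, conj_trivial, JA_T_apply]
    rw [Finset.sum_congr rfl fun i _ => mul_comm (v i) (∑ j, u i j * x j)]
    calc ∑ i, (∑ j, u i j * x j) * v i
        = ∑ i, ∑ j, x j * (v i * u i j) := by
          refine Finset.sum_congr rfl fun i _ => ?_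
          rw [Finset.sum_mul]
          exact Finset.sum_congr rfl fun j _ => by ring
      _ = ∑ j, ∑ i, x j * (v i * u i j) := Finset.sum_comm
      _ = ∑ j, x j * ∑ i, v i * u i j := by
          exact Finset.sum_congr rfl fun j _ => (Finset.mul_sum _ _ _).symm
  ext v
  rw [Submodule.mem_orthogonal]
  constructor
  · intro h
    have key : ∀ x : EuclideanSpace ℝ (Fin n), ∑ j, x j * (∑ i, v i * u i j) = 0 := by
      intro x
      rw [← hswap]
      exact h (JA_T u x) ⟨x, rfl⟩
    have hz : ∀ j, (∑ i, v i * u i j) = 0 := by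
      intro j
      set g : EuclideanSpace ℝ (Fin n) :=
        (WithLp.equiv 2 (Fin n → ℝ)).symm (fun j => ∑ i, v i * u i j) with hg
      have hgj : ∀ j, g j = ∑ i, v i * u i j := fun _ => rfl
      have h0 := key g
      have h1 : ∀ j ∈ Finset.univ, g j * (∑ i, v i * u i j) = (∑ i, v i * u i j)^2 := by
        intro j _; rw [hgj]; ring
      rw [Finset.sum_congr rfl h1] at h0
      have := (Finset.sum_eq_zero_iff_of_nonneg (fun j _ => sq_nonneg _)).mp h0 j
        (Finset.mem_univ j)
      exact pow_eq_zero_iff (n := 2) (by norm_num) |>.mp this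
    show ∑ i, v i • u i = 0
    funext j
    rw [Finset.sum_apply]
    simpa [Pi.smul_apply, smul_eq_mul] using hz j
  · intro hv w hw
    obtain ⟨x, rfl⟩ := hw
    rw [hswap]
    have hvL : ∑ i, v i • u i = 0 := hv
    have hz : ∀ j, (∑ i, v i * u i j) = 0 := by
      intro j
      have := congrFun hvL j
      rw [Finset.sum_apply] at this
      simpa [Pi.smul_apply, smul_eq_mul] using this
    simp [hz]

lemma JA_L_mem {p n : ℕ} (u : Fin p → (Fin n → ℝ)) (v : EuclideanSpace ℝ (Fin p)) :
    v ∈ JA_L u ↔ ∑ i, v i • u i = 0 := Iff.rfl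

lemma JA_coord_le_norm (y : EuclideanSpace ℝ (Fin p)) (i : Fin p) : |y i| ≤ ‖y‖ := by
  rw [EuclideanSpace.norm_eq]
  have h1 : |y i| = Real.sqrt (‖y i‖ ^ 2) := by
    rw [Real.sqrt_sq_eq_abs, Real.norm_eq_abs, abs_abs]
  rw [h1]
  exact Real.sqrt_le_sqrt (Finset.single_le_sum (f := fun i => ‖y i‖ ^ 2)
    (fun i _ => sq_nonneg _) (Finset.mem_univ i))

lemma JA_sup_le_l2 (y : EuclideanSpace ℝ (Fin p)) :
    ‖(WithLp.equiv 2 (Fin p → ℝ) y : Fin p → ℝ)‖ ≤ ‖y‖ := by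
  apply pi_norm_le_iff_of_nonneg (norm_nonneg y) |>.mpr
  intro i
  exact le_trans (le_of_eq (Real.norm_eq_abs _)) (JA_coord_le_norm y i)


/-- Properness of `J_A`: Suppose the polytope
`Δ = {x ∈ (ℝ^n)^* : ⟨x,u_i⟩ ≥ λ_i}` is bounded (and nonempty, being a polytope).  Then
`J_A = ι^* ∘ J_G : ℂ^p → L_ℝ^*` is proper, where `J_G(z) = (1/2)(|z_1|²,…,|z_p|²) + λ`
and `ι^*` is restriction of functionals to `L_ℝ = ker π`.  Properness is expressed by
compactness of the preimage of every closed ball of the dual space `L_ℝ^*`: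
`{z : ‖J_A(z)‖ ≤ r}` is compact for every `r`. -/
theorem JA_proper
    {p n : ℕ} (u : Fin p → (Fin n → ℝ)) (lam : Fin p → ℝ)
    (hbdd : Bornology.IsBounded {x : Fin n → ℝ | ∀ i, lam i ≤ ∑ j, x j * u i j})
    (hne : {x : Fin n → ℝ | ∀ i, lam i ≤ ∑ j, x j * u i j}.Nonempty)
    (L : Submodule ℝ (Fin p → ℝ))
    (hL : ∀ v, v ∈ L ↔ ∑ i, v i • u i = 0) :
    ∀ r : ℝ, IsCompact {z : Fin p → ℂ |
      ∀ v ∈ L, |∑ i, ((1 / 2 : ℝ) * ‖z i‖ ^ 2 + lam i) * v i| ≤ r * ‖v‖} := by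
  intro r
  obtain ⟨C, hC0, hC⟩ := JA_polytope_bound u lam hbdd hne (fun i => lam i - |r|)
  set U : ℝ := ∑ i, ∑ j, |u i j| with hUdef
  have hU0 : 0 ≤ U := Finset.sum_nonneg fun i _ => Finset.sum_nonneg fun j _ => abs_nonneg _
  set Λ : ℝ := ∑ i, |lam i| with hLdef
  have hΛ0 : 0 ≤ Λ := Finset.sum_nonneg fun i _ => abs_nonneg _
  set B : ℝ := |r| + C * U + Λ with hBdef
  have hB0 : 0 ≤ B := by positivity
  set R0 : ℝ := Real.sqrt (2 * B) with hR0def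
  -- closedness
  have hclosed : IsClosed {z : Fin p → ℂ |
      ∀ v ∈ L, |∑ i, ((1 / 2 : ℝ) * ‖z i‖ ^ 2 + lam i) * v i| ≤ r * ‖v‖} := by
    have hAeq : {z : Fin p → ℂ |
        ∀ v ∈ L, |∑ i, ((1 / 2 : ℝ) * ‖z i‖ ^ 2 + lam i) * v i| ≤ r * ‖v‖}
        = ⋂ v ∈ (L : Set (Fin p → ℝ)),
          {z : Fin p → ℂ |
            |∑ i, ((1 / 2 : ℝ) * ‖z i‖ ^ 2 + lam i) * v i| ≤ r * ‖v‖} := by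
      ext z
      simp only [Set.mem_setOf_eq, Set.mem_iInter, SetLike.mem_coe]
    rw [hAeq]
    refine isClosed_biInter fun v hv => isClosed_le ?_ continuous_const
    have hcont : Continuous fun z : Fin p → ℂ =>
        ∑ i, ((1 / 2 : ℝ) * ‖z i‖ ^ 2 + lam i) * v i :=
      continuous_finset_sum _ fun i _ =>
        ((continuous_const.mul (((continuous_apply i).norm).pow 2)).add
          continuous_const).mul continuous_const
    exact hcont.abs
  -- boundedness
  have hsub : {z : Fin p → ℂ |
      ∀ v ∈ L, |∑ i, ((1 / 2 : ℝ) * ‖z i‖ ^ 2 + lam i) * v i| ≤ r * ‖v‖}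
      ⊆ Metric.closedBall 0 R0 := by
    intro z hz
    set w : EuclideanSpace ℝ (Fin p) :=
      (WithLp.equiv 2 (Fin p → ℝ)).symm
        (fun i => (1 / 2 : ℝ) * ‖z i‖ ^ 2 + lam i) with hwdef
    have hwi : ∀ i, w i = (1 / 2 : ℝ) * ‖z i‖ ^ 2 + lam i := fun _ => rfl
    obtain ⟨a, haL, b, hbO, hab⟩ := (JA_L u).exists_add_mem_mem_orthogonal w
    -- the norm bound on a
    have haL' : (WithLp.equiv 2 (Fin p → ℝ) a : Fin p → ℝ) ∈ L :=
      (hL _).mpr ((JA_L_mem u a).mp haL)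
    have hza := hz _ haL'
    have hinner : (inner ℝ w a : ℝ) = ∑ i, w i * a i := by
      rw [PiLp.inner_apply]
      simp only [RCLike.inner_apply, conj_trivial]
      exact Finset.sum_congr rfl fun i _ => mul_comm _ _
    have hinner2 : (inner ℝ w a : ℝ) = ‖a‖ ^ 2 := by
      rw [hab, inner_add_left, real_inner_self_eq_norm_sq]
      have hba : (inner ℝ b a : ℝ) = 0 := by
        rw [real_inner_comm]
        exact (Submodule.mem_orthogonal (JA_L u) b).mp hbO a haL
      rw [hba, add_zero]
    have hna : ‖a‖ ≤ |r| := by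
      have h1 : ‖a‖ ^ 2 ≤ |r| * ‖a‖ := by
        have h2 : |∑ i, w i * a i| ≤ r * ‖(WithLp.equiv 2 (Fin p → ℝ) a : Fin p → ℝ)‖ := by
          have : ∀ i, w i * (WithLp.equiv 2 (Fin p → ℝ) a : Fin p → ℝ) i = w i * a i :=
            fun _ => rfl
          exact hza
        have h3 : r * ‖(WithLp.equiv 2 (Fin p → ℝ) a : Fin p → ℝ)‖ ≤ |r| * ‖a‖ := by
          calc r * ‖(WithLp.equiv 2 (Fin p → ℝ) a : Fin p → ℝ)‖
              ≤ |r| * ‖(WithLp.equiv 2 (Fin p → ℝ) a : Fin p → ℝ)‖ :=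
                mul_le_mul_of_nonneg_right (le_abs_self r) (norm_nonneg _)
            _ ≤ |r| * ‖a‖ :=
                mul_le_mul_of_nonneg_left (JA_sup_le_l2 a) (abs_nonneg r)
        calc ‖a‖ ^ 2 = (inner ℝ w a : ℝ) := hinner2.symm
          _ ≤ |∑ i, w i * a i| := by rw [hinner]; exact le_abs_self _
          _ ≤ |r| * ‖a‖ := le_trans h2 h3
      rcases eq_or_lt_of_le (norm_nonneg a) with h0 | h0
      · rw [← h0]; exact abs_nonneg r
      · nlinarith
    -- b is in the range of JA_T
    have hbr : b ∈ LinearMap.range (JA_T u) := by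
      rw [← JA_orth u] at hbO
      rwa [Submodule.orthogonal_orthogonal] at hbO
    obtain ⟨x, hx⟩ := hbr
    -- x lies in the shrunk polytope
    have hxpoly : ∀ i, lam i - |r| ≤ ∑ j, (WithLp.equiv 2 (Fin n → ℝ) x : Fin n → ℝ) j * u i j := by
      intro i
      have hbi : b i = ∑ j, u i j * x j := by rw [← hx, JA_T_apply]
      have habi : w i = a i + b i := by rw [hab]; rfl
      have hwge : lam i ≤ w i := by
        rw [hwi i]; nlinarith [sq_nonneg (‖z i‖)]
      have hai : a i ≤ |r| := le_trans (le_abs_self _) (le_trans (JA_coord_le_norm a i) hna)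
      have hsums : ∑ j, (WithLp.equiv 2 (Fin n → ℝ) x : Fin n → ℝ) j * u i j
          = ∑ j, u i j * x j :=
        Finset.sum_congr rfl fun j _ => mul_comm _ _
      rw [hsums, ← hbi]
      linarith [habi, hwge, hai]
    have hxn : ‖(WithLp.equiv 2 (Fin n → ℝ) x : Fin n → ℝ)‖ ≤ C := hC _ hxpoly
    -- final coordinatewise bound
    rw [Metric.mem_closedBall, dist_zero_right]
    apply pi_norm_le_iff_of_nonneg (Real.sqrt_nonneg _) |>.mpr
    intro i
    have hbi : b i = ∑ j, u i j * x j := by rw [← hx, JA_T_apply]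
    have hbile : b i ≤ C * U := by
      rw [hbi]
      have h1 : ∑ j, u i j * x j ≤ ∑ j, |u i j| * C := by
        refine Finset.sum_le_sum fun j _ => ?_
        calc u i j * x j ≤ |u i j * x j| := le_abs_self _
          _ = |u i j| * |x j| := abs_mul _ _
          _ ≤ |u i j| * C := by
              refine mul_le_mul_of_nonneg_left ?_ (abs_nonneg _)
              calc |x j| = ‖(WithLp.equiv 2 (Fin n → ℝ) x : Fin n → ℝ) j‖ :=
                    (Real.norm_eq_abs _).symm
                _ ≤ ‖(WithLp.equiv 2 (Fin n → ℝ) x : Fin n → ℝ)‖ := norm_le_pi_norm _ j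
                _ ≤ C := hxn
      have h2 : ∑ j, |u i j| * C = (∑ j, |u i j|) * C := (Finset.sum_mul _ _ _).symm
      have h3 : (∑ j, |u i j|) * C ≤ U * C :=
        mul_le_mul_of_nonneg_right
          (Finset.single_le_sum (f := fun i => ∑ j, |u i j|)
            (fun i _ => Finset.sum_nonneg fun j _ => abs_nonneg _) (Finset.mem_univ i)) hC0
      calc ∑ j, u i j * x j ≤ ∑ j, |u i j| * C := h1
        _ = (∑ j, |u i j|) * C := h2
        _ ≤ U * C := h3
        _ = C * U := mul_comm _ _
    have habi : w i = a i + b i := by rw [hab]; rfl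
    have hai : a i ≤ |r| := le_trans (le_abs_self _) (le_trans (JA_coord_le_norm a i) hna)
    have hlam : -lam i ≤ Λ :=
      le_trans (neg_le_abs _) (Finset.single_le_sum (f := fun i => |lam i|)
        (fun i _ => abs_nonneg _) (Finset.mem_univ i))
    have hsq : ‖z i‖ ^ 2 ≤ 2 * B := by
      have hw2 := hwi i
      have : (1 / 2 : ℝ) * ‖z i‖ ^ 2 + lam i ≤ |r| + C * U := by
        rw [← hw2, habi]; linarith
      rw [hBdef]; linarith
    exact (Real.le_sqrt (norm_nonneg _) (by linarith)).mpr hsq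
  exact (isCompact_closedBall (0 : Fin p → ℂ) R0).of_isClosed_subset hclosed hsub
end

section
/- Let L_ℝ ⊂ ℝ^p be a linear subspace acting on ℂ^p by v · z = (e^{v_1}z_1, …, e^{v_p}z_p). Let J_A : ℂ^p → L_ℝ^* be given by ⟨J_A(z), v⟩ = Σ_i ((1/2)|z_i|² + λ_i) v_i for v ∈ L_ℝ, where λ ∈ ℝ^p is fixed. If z and v·z both lie in J_A^{-1}(0) for some v ∈ L_ℝ, then v·z = z. -/
/-- Transversality: Let `L_ℝ ⊂ ℝ^p` act on `ℂ^p` by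
`v · z = (e^{v_1} z_1, …, e^{v_p} z_p)`, and let `J_A : ℂ^p → L_ℝ^*` be given by
`⟨J_A(z), v⟩ = Σ_i ((1/2)|z_i|² + λ_i) v_i`.  If `z` and `v · z` both lie in
`J_A^{-1}(0)` for some `v ∈ L_ℝ`, then `v · z = z`. -/
theorem transversality
    (p : ℕ) (lam : Fin p → ℝ)
    (L : Submodule ℝ (Fin p → ℝ))
    (v : Fin p → ℝ) (hv : v ∈ L)
    (z : Fin p → ℂ)
    (h1 : ∀ w ∈ L, ∑ i, ((1 / 2 : ℝ) * ‖z i‖ ^ 2 + lam i) * w i = 0)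
    (h2 : ∀ w ∈ L, ∑ i, ((1 / 2 : ℝ) * ‖(Real.exp (v i) : ℂ) * z i‖ ^ 2 + lam i) * w i = 0) :
    (fun i => (Real.exp (v i) : ℂ) * z i) = z := by
  have h1v := h1 v hv
  have h2v := h2 v hv
  have habs : ∀ i, ‖(Real.exp (v i) : ℂ) * z i‖
      = Real.exp (v i) * ‖z i‖ := by
    intro i
    rw [norm_mul, Complex.norm_real, Real.norm_of_nonneg (Real.exp_pos _).le]
  have key : ∑ i, (1 / 2 : ℝ) * ‖z i‖ ^ 2 * ((Real.exp (v i)) ^ 2 - 1) * v i = 0 := by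
    calc ∑ i, (1 / 2 : ℝ) * ‖z i‖ ^ 2 * ((Real.exp (v i)) ^ 2 - 1) * v i
        = (∑ i, ((1 / 2 : ℝ) * ‖(Real.exp (v i) : ℂ) * z i‖ ^ 2 + lam i) * v i)
          - ∑ i, ((1 / 2 : ℝ) * ‖z i‖ ^ 2 + lam i) * v i := by
          rw [← Finset.sum_sub_distrib]
          refine Finset.sum_congr rfl fun i _ => ?_
          rw [habs i]; ring
      _ = 0 := by rw [h1v, h2v]; ring
  have hnn : ∀ i ∈ Finset.univ,
      0 ≤ (1 / 2 : ℝ) * ‖z i‖ ^ 2 * ((Real.exp (v i)) ^ 2 - 1) * v i := by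
    intro i _
    have ha : (0 : ℝ) ≤ (1 / 2 : ℝ) * ‖z i‖ ^ 2 := by positivity
    have h0 : (0 : ℝ) < Real.exp (v i) := Real.exp_pos _
    rcases le_or_gt 0 (v i) with h | h
    · have h1 : (1 : ℝ) ≤ Real.exp (v i) := Real.one_le_exp h
      have h2 : (0 : ℝ) ≤ Real.exp (v i) ^ 2 - 1 := by nlinarith
      exact mul_nonneg (mul_nonneg ha h2) h
    · have h1 : Real.exp (v i) ≤ 1 := Real.exp_le_one_iff.mpr h.le
      have h2 : Real.exp (v i) ^ 2 - 1 ≤ 0 := by nlinarith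
      have := mul_nonpos_of_nonneg_of_nonpos ha h2
      nlinarith
  have hzero := (Finset.sum_eq_zero_iff_of_nonneg hnn).mp key
  funext i
  have hi := hzero i (Finset.mem_univ i)
  by_cases hz : z i = 0
  · simp [hz]
  · have hza : (0 : ℝ) < (1 / 2 : ℝ) * ‖z i‖ ^ 2 := by
      have : 0 < ‖z i‖ := norm_pos_iff.mpr hz
      positivity
    have h0 : (0 : ℝ) < Real.exp (v i) := Real.exp_pos _
    have hv0 : v i = 0 := by
      rcases lt_trichotomy (v i) 0 with h | h | h
      · have he : Real.exp (v i) < 1 := by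
          rw [← Real.exp_zero]; exact Real.exp_lt_exp.mpr h
        have h2 : Real.exp (v i) ^ 2 - 1 < 0 := by nlinarith
        have := mul_pos_of_neg_of_neg (mul_neg_of_pos_of_neg hza h2) h
        linarith
      · exact h
      · have he : 1 < Real.exp (v i) := by
          rw [← Real.exp_zero]; exact Real.exp_lt_exp.mpr h
        have h2 : 0 < Real.exp (v i) ^ 2 - 1 := by nlinarith
        have := mul_pos (mul_pos hza h2) h
        linarith
    rw [hv0, Real.exp_zero]
    push_cast
    ring
end

section
/- Let u_1,…,u_p ∈ ℤ^n with π : ℤ^p → ℤ^n, e_i ↦ u_i, and L_ℂ = ker(π ⊗ ℂ) ⊂ ℂ^p, L = ker π ∩ ℤ^p. Fix an index set I ⊂ {1,…,p} and let σ^⊥ = ∩_{i∈I} u_i^⊥ in (ℝ^n)^*, R = σ^⊥ ∩ Π^* where Π = π(ℤ^p). Suppose z ∈ (ℂ^×)^{I^c} (i.e., z_i = 0 iff i ∈ I) satisfies ∏_{j∉I} z_j^{⟨x,u_j⟩} = 1 for all x ∈ R. Then there exists v ∈ L_ℂ such that z_j = e^{2πi v_j} for all j ∉ I. -/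
open Submodule Set

private lemma monomial_aux_cast_smul {n : ℕ} (a : ℚ) (y : Fin n → ℂ) :
    a • y = (a : ℂ) • y := by
  funext k
  simp [Rat.smul_def]

/-- The coordinatewise rational-to-complex cast as a `ℚ`-linear map. -/
private noncomputable def monomialCastC (n : ℕ) : (Fin n → ℚ) →ₗ[ℚ] (Fin n → ℂ) where
  toFun v := fun k => ((v k : ℚ) : ℂ)
  map_add' x y := by funext k; simp
  map_smul' a x := by
    funext k
    simp [Rat.smul_def]

/-- Let `u_1,…,u_p ∈ ℤ^n`, `I ⊆ {1,…,p}`, and `z ∈ ℂ^p` with `z_i = 0 ⟺ i ∈ I`.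
If `∏_j z_j^{⟨x,u_j⟩} = 1` for every `x ∈ R = {x ∈ Π^* : ⟨x,u_i⟩ = 0 ∀ i ∈ I}` (membership
`x ∈ Π^*` being witnessed by the integrality of all pairings `⟨x,u_j⟩ = m_j ∈ ℤ`, since
`Π = π(ℤ^p)` is generated by the `u_j`), then there is `v ∈ L_ℂ = ker(π ⊗ ℂ)` with
`z_j = e^{2πi v_j}` for all `j ∉ I`. -/
theorem monomial_fiber_over_one
    {p n : ℕ} (u : Fin p → (Fin n → ℤ)) (I : Finset (Fin p))
    (z : Fin p → ℂ)
    (hz : ∀ i, z i = 0 ↔ i ∈ I)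
    (hmon : ∀ (x : Fin n → ℝ) (m : Fin p → ℤ),
      (∀ j, ∑ k, x k * (u j k : ℝ) = (m j : ℝ)) →
      (∀ i ∈ I, m i = 0) →
      ∏ j, z j ^ (m j) = 1) :
    ∃ v : Fin p → ℂ,
      (∀ k, ∑ j, v j * (u j k : ℂ) = 0) ∧
      ∀ j ∉ I, z j = Complex.exp (2 * Real.pi * Complex.I * v j) := by
  classical
  set ci : ℂ := 2 * Real.pi * Complex.I with hci
  have hci0 : ci ≠ 0 := Complex.two_pi_I_ne_zero
  set w : Fin p → ℂ := fun j => if j ∈ I then 0 else Complex.log (z j) / ci with hw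
  have hwz : ∀ j ∉ I, Complex.exp (ci * w j) = z j := by
    intro j hj
    have hzj : z j ≠ 0 := fun h => hj ((hz j).1 h)
    simp only [hw, if_neg hj]
    rw [mul_div_cancel₀ _ hci0]
    exact Complex.exp_log hzj
  -- rational setup
  set uQ : Fin p → (Fin n → ℚ) := fun j k => (u j k : ℚ) with huQ
  set V : Submodule ℚ (Fin n → ℚ) := Submodule.span ℚ (uQ '' ↑I) with hV
  set q : (Fin n → ℚ) →ₗ[ℚ] ((Fin n → ℚ) ⧸ V) := V.mkQ with hq
  have hkerq : ∀ v : Fin n → ℚ, q v = 0 ↔ v ∈ V := by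
    intro v
    rw [hq, Submodule.mkQ_apply, Submodule.Quotient.mk_eq_zero]
  have huV : ∀ i ∈ I, uQ i ∈ V := by
    intro i hi
    exact Submodule.subset_span ⟨i, hi, rfl⟩
  set Λ : Submodule ℤ ((Fin n → ℚ) ⧸ V) := Submodule.span ℤ (Set.range fun j => q (uQ j)) with hΛ
  haveI hΛfin : Module.Finite ℤ Λ := by
    rw [Module.Finite.iff_fg]
    exact Submodule.fg_span (Set.finite_range _)
  haveI : Module.IsTorsionFree ℤ ((Fin n → ℚ) ⧸ V) :=
    Module.IsTorsionFree.of_smul_eq_zero fun r x h => by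
      rw [← Int.cast_smul_eq_zsmul ℚ] at h
      rcases smul_eq_zero.1 h with h | h
      · exact Or.inl (by exact_mod_cast h)
      · exact Or.inr h
  set b : Module.Basis (Module.Free.ChooseBasisIndex ℤ Λ) ℤ Λ := Module.Free.chooseBasis ℤ Λ with hb
  set ι := Module.Free.ChooseBasisIndex ℤ Λ with hι
  set lamb : ι → ((Fin n → ℚ) ⧸ V) := fun k => (b k : ((Fin n → ℚ) ⧸ V)) with hlamb
  have hlambΛ : ∀ k, lamb k ∈ Λ := fun k => (b k).2
  have hlamb_li : LinearIndependent ℤ lamb :=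
    b.linearIndependent.map' Λ.subtype (Submodule.ker_subtype Λ)
  have hlamb_liQ : LinearIndependent ℚ lamb :=
    hlamb_li.localization ℚ (nonZeroDivisors ℤ)
  -- integer representations for lamb and lifts lam
  have hgex : ∀ k, ∃ g : Fin p → ℤ, ∑ j, g j • q (uQ j) = lamb k := by
    intro k
    exact (mem_span_range_iff_exists_fun ℤ).1 (hlambΛ k)
  choose g hg using hgex
  set lam : ι → (Fin n → ℚ) := fun k => ∑ j, (g k j : ℚ) • uQ j with hlam
  have hqlam : ∀ k, q (lam k) = lamb k := by
    intro k
    rw [hlam]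
    simp only [map_sum, map_smul]
    rw [← hg k]
    refine Finset.sum_congr rfl fun j _ => ?_
    rw [Int.cast_smul_eq_zsmul]
  have hlam_liQ : LinearIndependent ℚ lam := by
    have he : lamb = q ∘ lam := funext fun k => (hqlam k).symm
    rw [he] at hlamb_liQ
    exact hlamb_liQ.of_comp q
  have hlam_inj : Function.Injective lam := hlam_liQ.injective
  -- decomposition of the uQ j along lam modulo V
  have hmex : ∀ j, ∃ m : ι → ℤ, ∑ k, m k • lamb k = q (uQ j) := by
    intro j
    have h1 : q (uQ j) ∈ Λ := Submodule.subset_span ⟨j, rfl⟩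
    have h2 : (⟨q (uQ j), h1⟩ : Λ) ∈ Submodule.span ℤ (Set.range b) := by
      rw [b.span_eq]; trivial
    obtain ⟨c, hc⟩ := (mem_span_range_iff_exists_fun ℤ).1 h2
    refine ⟨c, ?_⟩
    have := congrArg (Λ.subtype) hc
    simpa [map_sum] using this
  choose m hm using hmex
  have hmV : ∀ j, uQ j - ∑ k, (m j k : ℚ) • lam k ∈ V := by
    intro j
    rw [← hkerq]
    rw [map_sub, map_sum]
    simp only [map_smul, hqlam]
    rw [sub_eq_zero, ← hm j]
    refine (Finset.sum_congr rfl fun k _ => ?_).symm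
    rw [Int.cast_smul_eq_zsmul]
  -- extend lam to a basis of ℚ^n through V
  set s : Set (Fin n → ℚ) := Set.range lam with hsdef
  have hs_li : LinearIndepOn ℚ id s := hlam_liQ.linearIndepOn_id
  have hst1 : s ⊆ s ∪ ↑V := Set.subset_union_left
  set b1 : Set (Fin n → ℚ) := hs_li.extend hst1 with hb1def
  have hsb1 : s ⊆ b1 := hs_li.subset_extend _
  have hb1t1 : b1 ⊆ s ∪ ↑V := hs_li.extend_subset _
  have ht1span : (s ∪ ↑V) ⊆ ↑(Submodule.span ℚ b1) := hs_li.subset_span_extend _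
  have hb1_li : LinearIndepOn ℚ id b1 := hs_li.linearIndepOn_extend _
  set b2 : Set (Fin n → ℚ) := hb1_li.extend (Set.subset_univ b1) with hb2def
  have hb1b2 : b1 ⊆ b2 := hb1_li.subset_extend _
  set B : Module.Basis b2 ℚ (Fin n → ℚ) := Module.Basis.extend hb1_li with hB
  haveI : Fintype b2 := IsNoetherian.fintypeBasisIndex B
  have hBapply : ∀ x : b2, B x = ↑x := fun x => Module.Basis.extend_apply_self _ x
  have hlam_s : ∀ k, lam k ∈ s := fun k => ⟨k, rfl⟩
  set idx : ι → b2 := fun k => ⟨lam k, hb1b2 (hsb1 (hlam_s k))⟩ with hidx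
  have hidx_inj : Function.Injective idx := fun a c h => hlam_inj (congrArg Subtype.val h)
  -- coordinate vanishing lemmas
  have C1 : ∀ (S : Set (Fin n → ℚ)), S ⊆ b2 → ∀ x : b2, (↑x : Fin n → ℚ) ∉ S →
      ∀ v ∈ Submodule.span ℚ S, B.repr v x = 0 := by
    intro S hS x hx v hv
    have hker : Submodule.span ℚ S ≤ LinearMap.ker (B.coord x) := by
      rw [Submodule.span_le]
      intro y hy
      have hyb : y ∈ b2 := hS hy
      have hne : (⟨y, hyb⟩ : b2) ≠ x := by
        intro h
        apply hx
        rw [← h]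
        exact hy
      have hyB : y = B ⟨y, hyb⟩ := (hBapply ⟨y, hyb⟩).symm
      rw [SetLike.mem_coe, LinearMap.mem_ker, Module.Basis.coord_apply, hyB, Module.Basis.repr_self]
      exact Finsupp.single_eq_of_ne hne.symm
    have := hker hv
    rwa [LinearMap.mem_ker, Module.Basis.coord_apply] at this
  have hVspan : (V : Set (Fin n → ℚ)) ⊆ ↑(Submodule.span ℚ (b1 \ s)) := by
    intro v hv
    have hv1 : v ∈ Submodule.span ℚ b1 := ht1span (Or.inr hv)
    have hsplit : Submodule.span ℚ b1 ≤ Submodule.span ℚ (b1 \ s) ⊔ Submodule.span ℚ s := by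
      rw [← Submodule.span_union]
      refine Submodule.span_mono ?_
      intro y hy
      by_cases h : y ∈ s
      · exact Or.inr h
      · exact Or.inl ⟨hy, h⟩
    obtain ⟨v1, hv1', v2, hv2', hsum⟩ := Submodule.mem_sup.1 (hsplit hv1)
    have hv2r : v2 ∈ Submodule.span ℚ (Set.range lam) := hv2'
    obtain ⟨a, ha⟩ := (mem_span_range_iff_exists_fun ℚ).1 hv2r
    have hb1sV : Submodule.span ℚ (b1 \ s) ≤ V := by
      refine Submodule.span_le.2 ?_
      intro y hy
      rcases hb1t1 hy.1 with h | h
      · exact absurd h hy.2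
      · exact h
    have hqv : q v = 0 := (hkerq v).2 hv
    have hqv1 : q v1 = 0 := (hkerq v1).2 (hb1sV hv1')
    have hqv2 : q v2 = 0 := by
      have := congrArg q hsum
      rw [map_add, hqv1, zero_add, hqv] at this
      exact this
    have hzero : ∑ k, a k • lamb k = 0 := by
      have : q v2 = ∑ k, a k • lamb k := by
        rw [← ha, map_sum]
        simp only [map_smul, hqlam]
      rw [← this, hqv2]
    have ha0 : ∀ k, a k = 0 := Fintype.linearIndependent_iff.1 hlamb_liQ a hzero
    have hv20 : v2 = 0 := by
      rw [← ha]
      simp [ha0]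
    rw [← hsum, hv20, add_zero]
    exact hv1'
  have CV : ∀ v ∈ V, ∀ x : b2, (↑x : Fin n → ℚ) ∉ b1 \ s → B.repr v x = 0 := by
    intro v hv x hx
    exact C1 (b1 \ s) (fun y hy => hb1b2 hy.1) x hx v (hVspan hv)
  have Clam : ∀ (k : ι) (x : b2), B.repr (lam k) x = if x = idx k then 1 else 0 := by
    intro k x
    have : lam k = B (idx k) := (hBapply (idx k)).symm
    rw [this, Module.Basis.repr_self, Finsupp.single_apply]
    by_cases h : x = idx k
    · rw [if_pos h.symm, if_pos h]
    · rw [if_neg fun hh => h hh.symm, if_neg h]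
  have hidxns : ∀ k : ι, (↑(idx k) : Fin n → ℚ) ∉ b1 \ s := fun k hx => hx.2 (hlam_s k)
  -- coordinates of uQ j
  have hcu : ∀ j k, B.repr (uQ j) (idx k) = (m j k : ℚ) := by
    intro j k
    have hdec : uQ j = (uQ j - ∑ l, (m j l : ℚ) • lam l) + ∑ l, (m j l : ℚ) • lam l := by
      ring
    rw [hdec, map_add, Finsupp.add_apply, CV _ (hmV j) (idx k) (hidxns k), zero_add,
      map_sum, Finset.sum_apply']
    have hterm : ∀ l, (B.repr ((m j l : ℚ) • lam l)) (idx k)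
        = (m j l : ℚ) * (if idx k = idx l then 1 else 0) := by
      intro l
      rw [map_smul, Finsupp.smul_apply, Clam l (idx k)]
      simp
    rw [Finset.sum_eq_single k]
    · rw [hterm k, if_pos rfl, mul_one]
    · intro l _ hlk
      rw [hterm l, if_neg, mul_zero]
      exact fun h => hlk (hidx_inj h).symm
    · intro h
      exact absurd (Finset.mem_univ k) h
  have hmI : ∀ i ∈ I, ∀ k, m i k = 0 := by
    intro i hi k
    have h0 : B.repr (uQ i) (idx k) = 0 := CV _ (huV i hi) (idx k) (hidxns k)
    have := (hcu i k).symm.trans h0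
    exact_mod_cast this
  have hub1 : ∀ j, uQ j ∈ Submodule.span ℚ b1 := by
    intro j
    have h1 : uQ j - ∑ l, (m j l : ℚ) • lam l ∈ Submodule.span ℚ b1 :=
      ht1span (Or.inr (hmV j))
    have h2 : ∑ l, (m j l : ℚ) • lam l ∈ Submodule.span ℚ b1 :=
      Submodule.sum_mem _ fun l _ =>
        Submodule.smul_mem _ _ (Submodule.subset_span (hsb1 (hlam_s l)))
    have := Submodule.add_mem _ h1 h2
    simpa using this
  -- integrality of the monomial exponents
  have hNex : ∀ k : ι, ∃ N : ℤ, ∑ j, (m j k : ℂ) * w j = (N : ℂ) := by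
    intro k
    set eQ : Fin n → (Fin n → ℚ) := fun mm m' => if mm = m' then 1 else 0 with heQ
    have hurep : ∀ j, (B.coord (idx k)) (uQ j) = ∑ mm, uQ j mm * (B.coord (idx k)) (eQ mm) := by
      intro j
      conv_lhs => rw [pi_eq_sum_univ (uQ j)]
      rw [map_sum]
      exact Finset.sum_congr rfl fun mm _ => by rw [map_smul, smul_eq_mul]
    have hx : ∀ j, ∑ mm, ((((B.coord (idx k)) (eQ mm) : ℚ) : ℝ)) * (u j mm : ℝ) = ((m j k : ℤ) : ℝ) := by
      intro j
      have hQ : ∑ mm, uQ j mm * (B.coord (idx k)) (eQ mm) = (m j k : ℚ) := by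
        rw [← hurep j, Module.Basis.coord_apply, hcu j k]
      have := congrArg (fun t : ℚ => (t : ℝ)) hQ
      push_cast at this
      rw [← this]
      refine Finset.sum_congr rfl fun mm _ => ?_
      have : uQ j mm = ((u j mm : ℤ) : ℚ) := rfl
      rw [this]
      push_cast
      ring
    have hprod := hmon (fun mm => (((B.coord (idx k)) (eQ mm) : ℚ) : ℝ)) (fun j => m j k) hx
      (fun i hi => hmI i hi k)
    have hfac : ∀ j, z j ^ (m j k) = Complex.exp ((m j k : ℂ) * (ci * w j)) := by
      intro j
      by_cases hj : j ∈ I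
      · rw [hmI j hj k]
        simp
      · rw [← hwz j hj]
        exact (Complex.exp_int_mul _ _).symm
    rw [Finset.prod_congr rfl fun j _ => hfac j, ← Complex.exp_sum] at hprod
    obtain ⟨N, hN⟩ := Complex.exp_eq_one_iff.1 hprod
    refine ⟨N, ?_⟩
    have h1 : ci * ∑ j, (m j k : ℂ) * w j = ci * (N : ℂ) := by
      rw [Finset.mul_sum]
      have hre : ∑ j, ci * ((m j k : ℂ) * w j) = ∑ j, (m j k : ℂ) * (ci * w j) :=
        Finset.sum_congr rfl fun j _ => by ring
      rw [hre, hN, hci]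
      ring
    exact mul_left_cancel₀ hci0 h1
  choose N hN using hNex
  -- the complex cast and the vector d
  set castC : (Fin n → ℚ) →ₗ[ℚ] (Fin n → ℂ) := monomialCastC n with hcastC
  set uC : Fin p → (Fin n → ℂ) := fun j mm => ((u j mm : ℤ) : ℂ) with huC
  have hcast_u : ∀ j, castC (uQ j) = uC j := by
    intro j
    funext mm
    show (((u j mm : ℤ) : ℚ) : ℂ) = ((u j mm : ℤ) : ℂ)
    push_cast
    rfl
  set T : Submodule ℂ (Fin n → ℂ) := Submodule.span ℂ (uC '' ↑I) with hT
  have hVT : ∀ v, v ∈ V → castC v ∈ T := by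
    intro v hv
    rw [hV] at hv
    induction hv using Submodule.span_induction with
    | mem x hx =>
      obtain ⟨i, hi, rfl⟩ := hx
      exact Submodule.subset_span ⟨i, hi, (hcast_u i).symm⟩
    | zero => rw [map_zero]; exact T.zero_mem
    | add x y hx hy ihx ihy => rw [map_add]; exact T.add_mem ihx ihy
    | smul a x hx ih =>
      rw [map_smul, monomial_aux_cast_smul]
      exact T.smul_mem _ ih
  set d : Fin n → ℂ := (∑ j, w j • uC j) - ∑ k, (N k : ℂ) • castC (lam k) with hd
  -- representation of uC j in the casted basis
  have hBrep : ∀ j, uC j = ∑ x : b2, ((B.repr (uQ j) x : ℚ) : ℂ) • castC ↑x := by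
    intro j
    have hrat : uQ j = ∑ x : b2, B.repr (uQ j) x • (B x) := (B.sum_repr (uQ j)).symm
    rw [← hcast_u j]
    conv_lhs => rw [hrat]
    rw [map_sum]
    refine Finset.sum_congr rfl fun x _ => ?_
    rw [map_smul, monomial_aux_cast_smul, hBapply]
  have hsum1 : (∑ j, w j • uC j)
      = ∑ x : b2, (∑ j, w j * ((B.repr (uQ j) x : ℚ) : ℂ)) • castC ↑x := by
    have h1 : (∑ j, w j • uC j)
        = ∑ j, ∑ x : b2, (w j * ((B.repr (uQ j) x : ℚ) : ℂ)) • castC ↑x := by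
      refine Finset.sum_congr rfl fun j _ => ?_
      rw [hBrep j, Finset.smul_sum]
      refine Finset.sum_congr rfl fun x _ => ?_
      rw [smul_smul]
    rw [h1, Finset.sum_comm]
    refine Finset.sum_congr rfl fun x _ => ?_
    rw [Finset.sum_smul]
  have hsum2 : (∑ k, (N k : ℂ) • castC (lam k))
      = ∑ x ∈ Finset.univ.image idx, (∑ j, w j * ((B.repr (uQ j) x : ℚ) : ℂ)) • castC ↑x := by
    rw [Finset.sum_image (fun a _ c _ h => hidx_inj h)]
    refine Finset.sum_congr rfl fun k _ => ?_
    have hcoef : (∑ j, w j * ((B.repr (uQ j) (idx k) : ℚ) : ℂ)) = (N k : ℂ) := by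
      rw [← hN k]
      refine Finset.sum_congr rfl fun j _ => ?_
      rw [hcu j k]
      push_cast
      ring
    rw [hcoef]
  have hdT : d ∈ T := by
    rw [hd, hsum1, hsum2, ← Finset.sum_sdiff_eq_sub (Finset.subset_univ _)]
    refine Submodule.sum_mem _ fun x hx => ?_
    by_cases hxb1 : (↑x : Fin n → ℚ) ∈ b1
    · have hxs : (↑x : Fin n → ℚ) ∉ s := by
        intro hxs
        obtain ⟨k, hk⟩ := hxs
        have : x = idx k := Subtype.ext hk.symm
        exact (Finset.mem_sdiff.1 hx).2
          (by rw [this]; exact Finset.mem_image_of_mem idx (Finset.mem_univ k))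
      have hxV : (↑x : Fin n → ℚ) ∈ (V : Set (Fin n → ℚ)) := by
        rcases hb1t1 hxb1 with h | h
        · exact absurd h hxs
        · exact h
      exact Submodule.smul_mem _ _ (hVT _ hxV)
    · have hco : ∀ j, B.repr (uQ j) x = 0 := fun j => C1 b1 hb1b2 x hxb1 _ (hub1 j)
      have : (∑ j, w j * ((B.repr (uQ j) x : ℚ) : ℂ)) = 0 := by
        simp [hco]
      rw [this, zero_smul]
      exact T.zero_mem
  -- extract coefficients of d over the u_i, i ∈ I
  set uCI : Fin p → (Fin n → ℂ) := fun j => if j ∈ I then uC j else 0 with huCI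
  have hTle : T ≤ Submodule.span ℂ (Set.range uCI) := by
    rw [hT]
    refine Submodule.span_le.2 ?_
    rintro y ⟨i, hi, rfl⟩
    exact Submodule.subset_span ⟨i, by simp [huCI, Finset.mem_coe.1 hi]⟩
  obtain ⟨a, ha⟩ := (mem_span_range_iff_exists_fun ℂ).1 (hTle hdT)
  set afun : Fin p → ℂ := fun j => if j ∈ I then a j else 0 with hafun
  have hasum : ∑ j, afun j • uC j = d := by
    rw [← ha]
    refine Finset.sum_congr rfl fun j _ => ?_
    by_cases hj : j ∈ I <;> simp [hafun, huCI, hj]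
  -- the final vector v
  refine ⟨fun j => w j - (∑ k, (N k : ℂ) * ((g k j : ℤ) : ℂ)) - afun j, ?_, ?_⟩
  · intro kk
    have hlamcast : ∀ k, castC (lam k) kk = ∑ j, ((g k j : ℤ) : ℂ) * ((u j kk : ℤ) : ℂ) := by
      intro k
      have h1 : lam k kk = ∑ j, (g k j : ℚ) * uQ j kk := by
        simp [hlam, Finset.sum_apply]
      have h2 : castC (lam k) kk = ((lam k kk : ℚ) : ℂ) := rfl
      rw [h2, h1]
      push_cast
      refine Finset.sum_congr rfl fun j _ => ?_
      have : uQ j kk = ((u j kk : ℤ) : ℚ) := rfl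
      rw [this]
      push_cast
      ring
    have e1 : (∑ j, w j • uC j) kk = ∑ j, w j * ((u j kk : ℤ) : ℂ) := by
      rw [Finset.sum_apply]
      exact Finset.sum_congr rfl fun j _ => by simp [huC]
    have e2 : (∑ k, (N k : ℂ) • castC (lam k)) kk = ∑ k, (N k : ℂ) * castC (lam k) kk := by
      rw [Finset.sum_apply]
      exact Finset.sum_congr rfl fun k _ => by simp
    have e3 : (∑ j, afun j • uC j) kk = ∑ j, afun j * ((u j kk : ℤ) : ℂ) := by
      rw [Finset.sum_apply]
      exact Finset.sum_congr rfl fun j _ => by simp [huC]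
    have hdkk : d kk = (∑ j, w j • uC j) kk - (∑ k, (N k : ℂ) • castC (lam k)) kk := by
      rw [hd]; rfl
    have hdkk2 : (∑ j, afun j • uC j) kk = d kk := by rw [hasum]
    have expand : ∑ j, (w j - (∑ k, (N k : ℂ) * ((g k j : ℤ) : ℂ)) - afun j) * ((u j kk : ℤ) : ℂ)
        = (∑ j, w j * ((u j kk : ℤ) : ℂ))
          - (∑ k, (N k : ℂ) * (∑ j, ((g k j : ℤ) : ℂ) * ((u j kk : ℤ) : ℂ)))
          - ∑ j, afun j * ((u j kk : ℤ) : ℂ) := by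
      simp only [sub_mul]
      rw [Finset.sum_sub_distrib, Finset.sum_sub_distrib]
      congr 1
      congr 1
      have hexp : ∀ j, (∑ k, (N k : ℂ) * ((g k j : ℤ) : ℂ)) * ((u j kk : ℤ) : ℂ)
          = ∑ k, (N k : ℂ) * (((g k j : ℤ) : ℂ) * ((u j kk : ℤ) : ℂ)) := by
        intro j
        rw [Finset.sum_mul]
        exact Finset.sum_congr rfl fun k _ => by ring
      rw [Finset.sum_congr rfl fun j _ => hexp j, Finset.sum_comm]
      exact Finset.sum_congr rfl fun k _ => (Finset.mul_sum _ _ _).symm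
    show ∑ j, (w j - (∑ k, (N k : ℂ) * ((g k j : ℤ) : ℂ)) - afun j) * ((u j kk : ℤ) : ℂ) = 0
    rw [expand]
    rw [show (∑ k, (N k : ℂ) * (∑ j, ((g k j : ℤ) : ℂ) * ((u j kk : ℤ) : ℂ)))
        = ∑ k, (N k : ℂ) * castC (lam k) kk from
      Finset.sum_congr rfl fun k _ => by rw [hlamcast k]]
    rw [← e1, ← e2, ← e3, hdkk2, ← hdkk]
    ring
  · intro j hj
    have ha0 : afun j = 0 := if_neg hj
    show z j = Complex.exp (ci * (w j - (∑ k, (N k : ℂ) * ((g k j : ℤ) : ℂ)) - afun j))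
    rw [ha0, sub_zero]
    have hS : (∑ k, (N k : ℂ) * ((g k j : ℤ) : ℂ)) = ((∑ k, N k * g k j : ℤ) : ℂ) := by
      push_cast
      rfl
    rw [mul_sub, Complex.exp_sub, hwz j hj, hS]
    rw [show ci * ((∑ k, N k * g k j : ℤ) : ℂ) = ((∑ k, N k * g k j : ℤ) : ℂ) * (2 * Real.pi * Complex.I) by
      rw [hci]; ring]
    rw [Complex.exp_int_mul_two_pi_mul_I, div_one]
end

section
/- Let u_1,…,u_p span ℝ^n, let π : ℝ^p → ℝ^n with π(e_i)=u_i, L = ker π ∩ ℤ^p spanning L_ℝ = ker π, and suppose the polytope Δ = {x : ⟨x,u_i⟩ ≥ λ_i} has nonempty interior. Then there exists z ∈ (ℂ^×)^p with (ι^*∘J_G)(z) = 0, where J_G(z) = (1/2)(|z_1|²,…,|z_p|²) + λ and ι^* is restriction to L_ℝ. Moreover the zero set (ι^*∘J_G)^{-1}(0) ⊂ ℂ^p has dimension p + n as a real set (it contains a smooth open subset of dimension p+n and is contained in no larger dimension). -/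
open Set Module
open scoped ENNReal Topology

namespace ZeroSetDim

variable {p n : ℕ}



variable {p n : ℕ}

private lemma sum_sq_eq_zero {k : ℕ} {v : Fin k → ℝ} (h : ∑ i, v i * v i = 0) : v = 0 := by
  funext i
  have h0 : ∀ j ∈ Finset.univ, (0:ℝ) ≤ v j * v j := fun j _ => mul_self_nonneg _
  have := (Finset.sum_eq_zero_iff_of_nonneg h0).1 h i (Finset.mem_univ i)
  simpa [mul_self_eq_zero] using this

/-- the dot-product functional `y ↦ ∑ j, x j * y j`. -/
private def dotL {k : ℕ} (x : Fin k → ℝ) : (Fin k → ℝ) →ₗ[ℝ] ℝ where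
  toFun y := ∑ j, x j * y j
  map_add' a b := by
    simp [Pi.add_apply, mul_add, Finset.sum_add_distrib]
  map_smul' c a := by
    simp [Finset.mul_sum, mul_left_comm]

private lemma eq_zero_of_dot_eq_zero (u : Fin p → Fin n → ℝ)
    (hspan : Submodule.span ℝ (Set.range u) = ⊤)
    {x : Fin n → ℝ} (hx : ∀ i, ∑ j, x j * u i j = 0) : x = 0 := by
  have hle : Submodule.span ℝ (Set.range u) ≤ LinearMap.ker (dotL x) := by
    rw [Submodule.span_le]
    rintro _ ⟨i, rfl⟩
    simpa [dotL] using hx i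
  have hx0 : dotL x x = 0 := by
    have : x ∈ LinearMap.ker (dotL x) := by
      rw [hspan] at hle; exact hle (Submodule.mem_top)
    simpa using this
  exact sum_sq_eq_zero (by simpa [dotL] using hx0)

/-- the map `M : ℝ^n → ℝ^p`, `x ↦ (⟨x, u i⟩)_i` -/
private def Mlin (u : Fin p → Fin n → ℝ) : (Fin n → ℝ) →ₗ[ℝ] (Fin p → ℝ) where
  toFun x := fun i => ∑ j, x j * u i j
  map_add' a b := by
    funext i
    simp [Pi.add_apply, add_mul, Finset.sum_add_distrib]
  map_smul' c a := by
    funext i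
    simp [Finset.mul_sum, mul_assoc]

private lemma Mlin_ker (u : Fin p → Fin n → ℝ)
    (hspan : Submodule.span ℝ (Set.range u) = ⊤) : LinearMap.ker (Mlin u) = ⊥ := by
  rw [LinearMap.ker_eq_bot']
  intro x hx
  exact eq_zero_of_dot_eq_zero u hspan fun i => congrFun hx i

/-- the subspace `W` of `ℝ^p` of vectors orthogonal to all relations among the `u i` -/
private def Wsub (u : Fin p → Fin n → ℝ) : Submodule ℝ (Fin p → ℝ) where
  carrier := {w | ∀ v : Fin p → ℝ, (∑ i, v i • u i = 0) → ∑ i, w i * v i = 0}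
  add_mem' := by
    intro a b ha hb v hv
    simp [Pi.add_apply, add_mul, Finset.sum_add_distrib, ha v hv, hb v hv]
  zero_mem' := by intro v hv; simp
  smul_mem' := by
    intro c a ha v hv
    simp [Pi.smul_apply, smul_eq_mul, mul_assoc, ← Finset.mul_sum, ha v hv]

private def Blin (u : Fin p → Fin n → ℝ) : (Fin p → ℝ) →ₗ[ℝ] (Fin n → ℝ) where
  toFun v := ∑ i, v i • u i
  map_add' a b := by
    simp [Pi.add_apply, add_smul, Finset.sum_add_distrib]
  map_smul' c a := by
    simp [Pi.smul_apply, smul_smul, Finset.smul_sum]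

private lemma Blin_range (u : Fin p → Fin n → ℝ)
    (hspan : Submodule.span ℝ (Set.range u) = ⊤) : LinearMap.range (Blin u) = ⊤ := by
  rw [eq_top_iff, ← hspan, Submodule.span_le]
  rintro _ ⟨i, rfl⟩
  refine ⟨Pi.single i 1, ?_⟩
  simp only [Blin, LinearMap.coe_mk, AddHom.coe_mk]
  rw [Finset.sum_eq_single i]
  · simp
  · intro b _ hb; simp [Pi.single_apply, hb]
  · simp

private lemma finrank_Wsub_le (u : Fin p → Fin n → ℝ)
    (hspan : Submodule.span ℝ (Set.range u) = ⊤) : finrank ℝ (Wsub u) ≤ n := by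
  set K := LinearMap.ker (Blin u)
  have hdisj : Wsub u ⊓ K = ⊥ := by
    rw [eq_bot_iff]
    rintro v ⟨hvW, hvK⟩
    have hv0 : ∑ i, v i • u i = 0 := hvK
    have := hvW v hv0
    have : v = 0 := sum_sq_eq_zero this
    simp [this]
  have h1 : finrank ℝ ↥(Wsub u ⊔ K) + finrank ℝ ↥(Wsub u ⊓ K) =
      finrank ℝ (Wsub u) + finrank ℝ K := Submodule.finrank_sup_add_finrank_inf_eq _ _
  rw [hdisj, finrank_bot, add_zero] at h1
  have h2 : finrank ℝ (Wsub u) + finrank ℝ K ≤ p := by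
    rw [← h1]
    simpa [Module.finrank_fin_fun] using Submodule.finrank_le (Wsub u ⊔ K)
  have h3 : finrank ℝ (LinearMap.range (Blin u)) + finrank ℝ K = p := by
    simpa [Module.finrank_fin_fun] using LinearMap.finrank_range_add_finrank_ker (Blin u)
  rw [Blin_range u hspan, finrank_top, Module.finrank_fin_fun] at h3
  omega


variable {p n : ℕ}

/-- If the "moment map" values of `z` come from a point `x`, then `z` is in the zero set. -/
private lemma mem_zero_set (u : Fin p → Fin n → ℝ) (lam : Fin p → ℝ) (z : Fin p → ℂ)
    (x : Fin n → ℝ) (hx : ∀ i, (1 / 2 : ℝ) * ‖z i‖ ^ 2 + lam i = ∑ j, x j * u i j) :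
    ∀ v : Fin p → ℝ, (∑ i, v i • u i = 0) →
      ∑ i, ((1 / 2 : ℝ) * ‖z i‖ ^ 2 + lam i) * v i = 0 := by
  intro v hv
  have hj : ∀ j, ∑ i, v i * u i j = 0 := by
    intro j
    have := congrFun hv j
    simpa [Finset.sum_apply] using this
  calc ∑ i, ((1 / 2 : ℝ) * ‖z i‖ ^ 2 + lam i) * v i
      = ∑ i, (∑ j, x j * u i j) * v i := by
        refine Finset.sum_congr rfl fun i _ => ?_; rw [hx i]
    _ = ∑ i, ∑ j, x j * (v i * u i j) := by
        refine Finset.sum_congr rfl fun i _ => ?_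
        rw [Finset.sum_mul]; exact Finset.sum_congr rfl fun j _ => by ring
    _ = ∑ j, ∑ i, x j * (v i * u i j) := Finset.sum_comm
    _ = ∑ j, x j * ∑ i, v i * u i j := by
        refine Finset.sum_congr rfl fun j _ => ?_; rw [Finset.mul_sum]
    _ = 0 := by simp [hj]

private lemma exists_interior_point (u : Fin p → Fin n → ℝ) (lam : Fin p → ℝ)
    (x₀ : Fin n → ℝ) (hx₀ : ∀ i, lam i < ∑ j, x₀ j * u i j) :
    ∃ z : Fin p → ℂ, (∀ v : Fin p → ℝ, (∑ i, v i • u i = 0) →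
      ∑ i, ((1 / 2 : ℝ) * ‖z i‖ ^ 2 + lam i) * v i = 0) ∧ ∀ i, z i ≠ 0 := by
  refine ⟨fun i => (Real.sqrt (2 * (∑ j, x₀ j * u i j - lam i)) : ℂ), ?_, ?_⟩
  · refine mem_zero_set u lam _ x₀ fun i => ?_
    have hpos : 0 ≤ 2 * (∑ j, x₀ j * u i j - lam i) := by
      have := hx₀ i; linarith
    rw [Complex.norm_real, Real.norm_eq_abs, abs_of_nonneg (Real.sqrt_nonneg _), Real.sq_sqrt hpos]
    ring
  · intro i
    have hpos : 0 < 2 * (∑ j, x₀ j * u i j - lam i) := by have := hx₀ i; linarith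
    simpa using (Real.sqrt_pos.2 hpos).ne'


private lemma dimH_lower (u : Fin p → Fin n → ℝ) (lam : Fin p → ℝ)
    (P : (Fin p → ℝ) →ₗ[ℝ] (Fin n → ℝ))
    (hP : ∀ x : Fin n → ℝ, P (fun i => ∑ j, x j * u i j) = x)
    (x₀ : Fin n → ℝ) (hx₀ : ∀ i, lam i < ∑ j, x₀ j * u i j)
    (Z : Set (Fin p → ℂ))
    (hmem : ∀ z : Fin p → ℂ, ∀ x : Fin n → ℝ,
      (∀ i, (1 / 2 : ℝ) * ‖z i‖ ^ 2 + lam i = ∑ j, x j * u i j) → z ∈ Z) :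
    ((n + p : ℕ) : ℝ≥0∞) ≤ dimH Z := by
  -- the open set of interior points
  set U : Set (Fin n → ℝ) := {x | ∀ i, lam i < ∑ j, x j * u i j} with hU
  have hUopen : IsOpen U := by
    have hrw : U = ⋂ i, {x : Fin n → ℝ | lam i < ∑ j, x j * u i j} := by
      ext x; simp [hU]
    rw [hrw]
    refine isOpen_iInter_of_finite fun i => ?_
    exact isOpen_lt continuous_const
      (continuous_finset_sum _ fun j _ => (continuous_apply j).mul continuous_const)
  obtain ⟨ε, hε, hball⟩ := Metric.isOpen_iff.1 hUopen x₀ hx₀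
  -- the parametrizing set
  set s₀ : Set ((Fin n → ℝ) × (Fin p → ℝ)) :=
    (Metric.ball x₀ ε) ×ˢ (Metric.ball (0 : Fin p → ℝ) 1) with hs₀
  have hs₀nhds : s₀ ∈ 𝓝 ((x₀, 0) : (Fin n → ℝ) × (Fin p → ℝ)) :=
    prod_mem_nhds (Metric.ball_mem_nhds _ hε) (Metric.ball_mem_nhds _ one_pos)
  have hdim_s₀ : dimH s₀ = ((n + p : ℕ) : ℝ≥0∞) := by
    rw [Real.dimH_of_mem_nhds hs₀nhds]
    norm_num [Module.finrank_prod, Module.finrank_fin_fun]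
  -- the parametrization
  set Φ : (Fin n → ℝ) × (Fin p → ℝ) → (Fin p → ℂ) := fun q i =>
    (Real.sqrt (2 * (∑ j, q.1 j * u i j - lam i)) : ℂ) * Complex.exp ((q.2 i : ℂ) * Complex.I)
    with hΦ
  have habs : ∀ q : (Fin n → ℝ) × (Fin p → ℝ), q.1 ∈ U → ∀ i,
      (‖Φ q i‖) ^ 2 = 2 * (∑ j, q.1 j * u i j - lam i) := by
    intro q hq i
    have h0 : (0:ℝ) ≤ 2 * (∑ j, q.1 j * u i j - lam i) := by have := hq i; linarith
    rw [hΦ]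
    simp only [norm_mul, Complex.norm_real, Real.norm_eq_abs, Complex.norm_exp_ofReal_mul_I, mul_one,
      abs_of_nonneg (Real.sqrt_nonneg _)]
    exact Real.sq_sqrt h0
  have hΦZ : Φ '' s₀ ⊆ Z := by
    rintro _ ⟨q, hq, rfl⟩
    have hqU : q.1 ∈ U := hball hq.1
    refine hmem _ q.1 fun i => ?_
    rw [habs q hqU i]; ring
  -- the half-space region on which we can invert
  set s' : Set (Fin p → ℂ) := {z | ∀ i, 0 < (z i).re} with hs'
  have hθ : ∀ q : (Fin n → ℝ) × (Fin p → ℝ), q ∈ s₀ → ∀ i, |q.2 i| < 1 := by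
    intro q hq i
    have := dist_le_pi_dist q.2 (0 : Fin p → ℝ) i
    have h2 := hq.2
    simp only [Metric.mem_ball] at h2
    calc |q.2 i| = dist (q.2 i) 0 := by simp [Real.dist_eq]
      _ ≤ dist q.2 0 := dist_le_pi_dist q.2 0 i
      _ < 1 := h2
  have hcos : ∀ x : ℝ, |x| < 1 → 0 < Real.cos x := by
    intro x hx
    have hpi := Real.pi_gt_three
    obtain ⟨h1, h2⟩ := abs_lt.1 hx
    exact Real.cos_pos_of_mem_Ioo ⟨by linarith, by linarith⟩
  have hΦs' : Φ '' s₀ ⊆ s' := by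
    rintro _ ⟨q, hq, rfl⟩ i
    have hqU : q.1 ∈ U := hball hq.1
    have hr : 0 < Real.sqrt (2 * (∑ j, q.1 j * u i j - lam i)) :=
      Real.sqrt_pos.2 (by have := hqU i; linarith)
    have : (Φ q i).re = Real.sqrt (2 * (∑ j, q.1 j * u i j - lam i)) * Real.cos (q.2 i) := by
      rw [hΦ]
      simp [Complex.mul_re, Complex.exp_ofReal_mul_I_re]
    rw [this]
    exact mul_pos hr (hcos _ (hθ q hq i))
  -- convexity of the half-space region
  have hconv' : Convex ℝ s' := by
    have hrw : s' = ⋂ i, {z : Fin p → ℂ | (0:ℝ) < (z i).re} := by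
      ext z; simp [hs']
    rw [hrw]
    refine convex_iInter fun i => ?_
    refine convex_halfSpace_gt ⟨fun a b => by simp, fun c a => by simp [Complex.smul_re]⟩ 0
  -- the smooth left inverse
  set P' := LinearMap.toContinuousLinearMap P with hP'
  set g : (Fin p → ℂ) → (Fin n → ℝ) × (Fin p → ℝ) := fun z =>
    (P' (fun i => (1 / 2 : ℝ) * ‖z i‖ ^ 2 + lam i),
     fun i => Real.arctan ((z i).im / (z i).re)) with hg
  have gsmooth : ContDiffOn ℝ 1 g s' := by
    refine ContDiffOn.prodMk ?_ ?_
    · refine ContDiff.contDiffOn ?_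
      refine P'.contDiff.comp ?_
      refine contDiff_pi.2 fun i => ?_
      have hrw : (fun z : Fin p → ℂ => (1 / 2 : ℝ) * ‖z i‖ ^ 2 + lam i)
          = fun z => (1 / 2 : ℝ) * ((z i).re ^ 2 + (z i).im ^ 2) + lam i := by
        funext z; rw [Complex.sq_norm, Complex.normSq_apply]; ring
      rw [hrw]
      have hre : ContDiff ℝ 1 (fun z : Fin p → ℂ => (z i).re) :=
        (Complex.reCLM.comp (ContinuousLinearMap.proj i : (Fin p → ℂ) →L[ℝ] ℂ)).contDiff
      have him : ContDiff ℝ 1 (fun z : Fin p → ℂ => (z i).im) :=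
        (Complex.imCLM.comp (ContinuousLinearMap.proj i : (Fin p → ℂ) →L[ℝ] ℂ)).contDiff
      exact (contDiff_const.mul ((hre.pow 2).add (him.pow 2))).add contDiff_const
    · refine contDiffOn_pi.2 fun i => ?_
      refine Real.contDiff_arctan.comp_contDiffOn ?_
      have hre : ContDiff ℝ 1 (fun z : Fin p → ℂ => (z i).re) :=
        (Complex.reCLM.comp (ContinuousLinearMap.proj i : (Fin p → ℂ) →L[ℝ] ℂ)).contDiff
      have him : ContDiff ℝ 1 (fun z : Fin p → ℂ => (z i).im) :=
        (Complex.imCLM.comp (ContinuousLinearMap.proj i : (Fin p → ℂ) →L[ℝ] ℂ)).contDiff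
      exact ContDiffOn.div him.contDiffOn hre.contDiffOn (fun z hz => (hz i).ne')
  -- g is a left inverse of Φ on s₀
  have hleft : ∀ q ∈ s₀, g (Φ q) = q := by
    intro q hq
    have hqU : q.1 ∈ U := hball hq.1
    have hpi := Real.pi_gt_three
    refine Prod.ext ?_ ?_
    · show P' (fun i => (1 / 2 : ℝ) * ‖Φ q i‖ ^ 2 + lam i) = q.1
      have : (fun i => (1 / 2 : ℝ) * ‖Φ q i‖ ^ 2 + lam i)
          = fun i => ∑ j, q.1 j * u i j := by
        funext i; rw [habs q hqU i]; ring
      rw [this]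
      simpa [hP'] using hP q.1
    · show (fun i => Real.arctan ((Φ q i).im / (Φ q i).re)) = q.2
      funext i
      have hr : 0 < Real.sqrt (2 * (∑ j, q.1 j * u i j - lam i)) :=
        Real.sqrt_pos.2 (by have := hqU i; linarith)
      have hrre : (Φ q i).re
          = Real.sqrt (2 * (∑ j, q.1 j * u i j - lam i)) * Real.cos (q.2 i) := by
        rw [hΦ]; simp [Complex.mul_re, Complex.exp_ofReal_mul_I_re]
      have hrim : (Φ q i).im
          = Real.sqrt (2 * (∑ j, q.1 j * u i j - lam i)) * Real.sin (q.2 i) := by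
        rw [hΦ]; simp [Complex.mul_im, Complex.exp_ofReal_mul_I_im]
      rw [hrre, hrim, mul_div_mul_left _ _ hr.ne', ← Real.tan_eq_sin_div_cos]
      obtain ⟨h1, h2⟩ := abs_lt.1 (hθ q hq i)
      exact Real.arctan_tan (by linarith) (by linarith)
  -- conclude
  calc ((n + p : ℕ) : ℝ≥0∞) = dimH s₀ := hdim_s₀.symm
    _ ≤ dimH (g '' (Φ '' s₀)) :=
        dimH_mono fun q hq => ⟨Φ q, mem_image_of_mem _ hq, hleft q hq⟩
    _ ≤ dimH (Φ '' s₀) := gsmooth.dimH_image_le hconv' hΦs'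
    _ ≤ dimH Z := dimH_mono hΦZ


private lemma dimH_upper (u : Fin p → Fin n → ℝ) (lam : Fin p → ℝ)
    (hspan : Submodule.span ℝ (Set.range u) = ⊤) :
    dimH {z : Fin p → ℂ | ∀ v : Fin p → ℝ, (∑ i, v i • u i = 0) →
      ∑ i, ((1 / 2 : ℝ) * ‖z i‖ ^ 2 + lam i) * v i = 0} ≤ ((n + p : ℕ) : ℝ≥0∞) := by
  classical
  set Z : Set (Fin p → ℂ) := {z | ∀ v : Fin p → ℝ, (∑ i, v i • u i = 0) →
      ∑ i, ((1 / 2 : ℝ) * ‖z i‖ ^ 2 + lam i) * v i = 0} with hZdef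
  have hcover : Z ⊆ ⋃ (T : Finset (Fin p)), ⋃ (m : ℕ),
      Z ∩ {z | (∀ i ∈ T, z i = 0) ∧ ∀ i ∉ T, ((m : ℝ) + 1)⁻¹ ≤ ‖z i‖} := by
    intro z hz
    have hchoice : ∀ i : Fin p, ∃ m : ℕ, z i ≠ 0 → ((m : ℝ) + 1)⁻¹ ≤ ‖z i‖ := by
      intro i
      by_cases h : z i = 0
      · exact ⟨0, fun h' => absurd h h'⟩
      · obtain ⟨m, hm⟩ := exists_nat_gt (‖z i‖)⁻¹
        refine ⟨m, fun _ => ?_⟩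
        have hpos : 0 < ‖z i‖ := norm_pos_iff.mpr h
        have h3 : (‖z i‖)⁻¹ < (m : ℝ) + 1 := by linarith
        have hm1 : (0:ℝ) < (m : ℝ) + 1 := by positivity
        rw [inv_eq_one_div, div_le_iff₀ hm1]
        have h4 : 1 = ‖z i‖ * (‖z i‖)⁻¹ :=
          (mul_inv_cancel₀ hpos.ne').symm
        nlinarith
    choose F hF using hchoice
    set T : Finset (Fin p) := Finset.univ.filter (fun i => z i = 0) with hT
    set m := Finset.univ.sup F with hm
    refine mem_iUnion.2 ⟨T, mem_iUnion.2 ⟨m, ⟨hz, ?_, ?_⟩⟩⟩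
    · intro i hi
      simpa [hT] using hi
    · intro i hi
      have hne : z i ≠ 0 := by simpa [hT] using hi
      have h1 : ((F i : ℝ) + 1)⁻¹ ≤ ‖z i‖ := hF i hne
      have hle : (F i : ℕ) ≤ m := Finset.le_sup (Finset.mem_univ i)
      have h2 : ((m : ℝ) + 1)⁻¹ ≤ ((F i : ℝ) + 1)⁻¹ := by
        apply inv_anti₀ (by positivity)
        have : (F i : ℝ) ≤ (m : ℝ) := by exact_mod_cast hle
        linarith
      linarith
  refine le_trans (dimH_mono hcover) ?_
  rw [dimH_iUnion]
  refine iSup_le fun T => ?_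
  rw [dimH_iUnion]
  refine iSup_le fun m => ?_
  set c : ℝ := ((m : ℝ) + 1)⁻¹ with hc
  have hcpos : 0 < c := by positivity
  set s : Set (↥(Wsub u) × (Fin p → ℝ)) :=
    {q | ∀ i, i ∉ T → lam i + c ^ 2 / 2 ≤ (q.1 : Fin p → ℝ) i} with hs
  set h : ↥(Wsub u) × (Fin p → ℝ) → (Fin p → ℂ) := fun q i =>
    if i ∈ T then 0 else
      (Real.sqrt (2 * ((q.1 : Fin p → ℝ) i - lam i)) : ℂ) *
        Complex.exp ((q.2 i : ℂ) * Complex.I) with hh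
  have hsub : Z ∩ {z | (∀ i ∈ T, z i = 0) ∧ ∀ i ∉ T, c ≤ ‖z i‖} ⊆ h '' s := by
    rintro z ⟨hzZ, hz1, hz2⟩
    have hωW : (fun i => (1 / 2 : ℝ) * ‖z i‖ ^ 2 + lam i) ∈ Wsub u :=
      fun v hv => hzZ v hv
    refine ⟨(⟨_, hωW⟩, fun i => Complex.arg (z i)), ?_, ?_⟩
    · intro i hi
      show lam i + c ^ 2 / 2 ≤ (1 / 2 : ℝ) * ‖z i‖ ^ 2 + lam i
      have h1 := hz2 i hi
      have hc2 : c ^ 2 ≤ ‖z i‖ ^ 2 := pow_le_pow_left₀ hcpos.le h1 2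
      linarith
    · funext i
      by_cases hi : i ∈ T
      · simp [hh, hi, hz1 i hi]
      · simp only [hh, if_neg hi]
        show (Real.sqrt (2 * ((1 / 2 : ℝ) * ‖z i‖ ^ 2 + lam i - lam i)) : ℂ) *
            Complex.exp ((Complex.arg (z i) : ℂ) * Complex.I) = z i
        have e1 : 2 * ((1 / 2 : ℝ) * ‖z i‖ ^ 2 + lam i - lam i)
            = ‖z i‖ ^ 2 := by ring
        rw [e1, Real.sqrt_sq (norm_nonneg _)]
        exact Complex.norm_mul_exp_arg_mul_I (z i)
  have hconv : Convex ℝ s := by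
    have hrw : s = ⋂ i, ⋂ (_ : i ∉ T),
        {q : ↥(Wsub u) × (Fin p → ℝ) | lam i + c ^ 2 / 2 ≤ (q.1 : Fin p → ℝ) i} := by
      ext q; simp [hs]
    rw [hrw]
    refine convex_iInter fun i => convex_iInter fun _ => ?_
    exact convex_halfSpace_ge ⟨fun a b => by simp, fun r a => by simp⟩ _
  have hsm : ContDiffOn ℝ 1 h s := by
    refine contDiffOn_pi.2 fun i => ?_
    by_cases hi : i ∈ T
    · simp only [hh, if_pos hi]
      exact contDiffOn_const
    · simp only [hh, if_neg hi]
      intro q hq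
      have hrpos : 0 < 2 * ((q.1 : Fin p → ℝ) i - lam i) := by
        have h1 := hq i hi
        nlinarith [sq_nonneg c, hcpos]
      have hcoord : ContDiff ℝ 1 (fun q : ↥(Wsub u) × (Fin p → ℝ) => (q.1 : Fin p → ℝ) i) := by
        have := ((ContinuousLinearMap.proj i : (Fin p → ℝ) →L[ℝ] ℝ).comp
          ((Wsub u).subtypeL.comp (ContinuousLinearMap.fst ℝ ↥(Wsub u) (Fin p → ℝ)))).contDiff (n := 1)
        exact this
      have hlin : ContDiff ℝ 1
          (fun q : ↥(Wsub u) × (Fin p → ℝ) => 2 * ((q.1 : Fin p → ℝ) i - lam i)) :=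
        contDiff_const.mul (hcoord.sub contDiff_const)
      have hsqrt : ContDiffAt ℝ 1
          (fun q : ↥(Wsub u) × (Fin p → ℝ) =>
            Real.sqrt (2 * ((q.1 : Fin p → ℝ) i - lam i))) q :=
        (Real.contDiffAt_sqrt hrpos.ne').comp q hlin.contDiffAt
      have hexp : ContDiff ℝ 1
          (fun q : ↥(Wsub u) × (Fin p → ℝ) => Complex.exp ((q.2 i : ℂ) * Complex.I)) := by
        have hin : ContDiff ℝ 1 (fun q : ↥(Wsub u) × (Fin p → ℝ) => (q.2 i : ℂ) * Complex.I) :=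
          (Complex.ofRealCLM.comp ((ContinuousLinearMap.proj i : (Fin p → ℝ) →L[ℝ] ℝ).comp
            (ContinuousLinearMap.snd ℝ ↥(Wsub u) (Fin p → ℝ)))).contDiff.mul contDiff_const
        exact (Complex.contDiff_exp (𝕜 := ℝ)).comp hin
      exact ((Complex.ofRealCLM.contDiff.contDiffAt.comp q hsqrt).mul
        hexp.contDiffAt).contDiffWithinAt
  calc dimH (Z ∩ {z | (∀ i ∈ T, z i = 0) ∧ ∀ i ∉ T, c ≤ ‖z i‖})
      ≤ dimH (h '' s) := dimH_mono hsub
    _ ≤ dimH s := hsm.dimH_image_le hconv Subset.rfl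
    _ ≤ dimH (univ : Set (↥(Wsub u) × (Fin p → ℝ))) := dimH_mono (subset_univ _)
    _ = (finrank ℝ (↥(Wsub u) × (Fin p → ℝ)) : ℝ≥0∞) := Real.dimH_univ_eq_finrank _
    _ ≤ ((n + p : ℕ) : ℝ≥0∞) := by
        have h1 : finrank ℝ (↥(Wsub u) × (Fin p → ℝ)) ≤ n + p := by
          rw [Module.finrank_prod, Module.finrank_fin_fun]
          exact Nat.add_le_add_right (finrank_Wsub_le u hspan) p
        exact_mod_cast Nat.cast_le.2 h1


end ZeroSetDim

/-- If `u_1,…,u_p` span `ℝ^n` and the polytope `Δ = {x : ⟨x,u_i⟩ ≥ λ_i}` has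
nonempty interior (witnessed by a point with all inequalities strict), then the zero set
`Z = (ι^* ∘ J_G)^{-1}(0) ⊂ ℂ^p` (where `J_G(z) = (1/2)(|z_1|²,…,|z_p|²) + λ` and `ι^*` is
restriction to `L_ℝ = ker π`) contains a point with all coordinates nonzero, and `Z` has
real dimension `p + n` (expressed via Hausdorff dimension). -/
theorem zero_set_dimension
    {p n : ℕ} (u : Fin p → (Fin n → ℝ)) (lam : Fin p → ℝ)
    (hspan : Submodule.span ℝ (Set.range u) = ⊤)
    (hint : ∃ x : Fin n → ℝ, ∀ i, lam i < ∑ j, x j * u i j)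
    (Z : Set (Fin p → ℂ))
    (hZ : Z = {z : Fin p → ℂ | ∀ v : Fin p → ℝ, (∑ i, v i • u i = 0) →
        ∑ i, ((1 / 2 : ℝ) * ‖z i‖ ^ 2 + lam i) * v i = 0}) :
    (∃ z ∈ Z, ∀ i, z i ≠ 0) ∧ dimH Z = (p + n : ℕ) := by
  subst hZ
  obtain ⟨x₀, hx₀⟩ := hint
  obtain ⟨z, hz, hznz⟩ := ZeroSetDim.exists_interior_point u lam x₀ hx₀
  refine ⟨⟨z, hz, hznz⟩, ?_⟩
  obtain ⟨P, hPc⟩ := (ZeroSetDim.Mlin u).exists_leftInverse_of_injective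
    (ZeroSetDim.Mlin_ker u hspan)
  have hP : ∀ x : Fin n → ℝ, P (fun i => ∑ j, x j * u i j) = x := by
    intro x
    have h1 := LinearMap.congr_fun hPc x
    simpa [ZeroSetDim.Mlin] using h1
  have hlow := ZeroSetDim.dimH_lower u lam P hP x₀ hx₀
    {z : Fin p → ℂ | ∀ v : Fin p → ℝ, (∑ i, v i • u i = 0) →
      ∑ i, ((1 / 2 : ℝ) * ‖z i‖ ^ 2 + lam i) * v i = 0}
    (fun z x hx => ZeroSetDim.mem_zero_set u lam z x hx)
  have hup := ZeroSetDim.dimH_upper u lam hspan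
  have heq := le_antisymm hup hlow
  rw [heq, Nat.add_comm]
end

section
/- Let T = N × B be a product of tori, and let S₁, S₂ be compact B-spaces with S₁/B contractible. Suppose φ : N × S₁ → N × S₂ is a T-equivariant homeomorphism, written φ(n, ν) = (n·f(ν), g(ν)) with f : S₁ → N and g : S₁ → S₂ continuous. Then f is B-invariant, g is B-equivariant, and there exists a homotopy φ_t : S₁ → N (t ∈ [0,1]) with φ_1 = f, φ_0 ≡ e, and each φ_t B-invariant. -/
/-- Let `T = N × B` be a product of tori, `S₁, S₂` compact `B`-spaces with
`S₁/B` contractible, and `φ : N × S₁ → N × S₂` a `T`-equivariant homeomorphism written as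
`φ(n, ν) = (n · f(ν), g(ν))`.  Then `f` is `B`-invariant, `g` is `B`-equivariant, and there
is a homotopy `φ_t : S₁ → N` of `B`-invariant maps with `φ₁ = f` and `φ₀ ≡ e`. -/
theorem equivariant_homotopy_extension
    {N B S₁ S₂ : Type*}
    [TopologicalSpace N] [CommGroup N] [IsTopologicalGroup N] [CompactSpace N]
    [ConnectedSpace N] [PathConnectedSpace N]
    [TopologicalSpace B] [CommGroup B] [IsTopologicalGroup B] [CompactSpace B]
    [ConnectedSpace B]
    [TopologicalSpace S₁] [CompactSpace S₁] [MulAction B S₁] [ContinuousSMul B S₁]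
    [TopologicalSpace S₂] [CompactSpace S₂] [MulAction B S₂] [ContinuousSMul B S₂]
    (hcontr : ContractibleSpace (Quotient (MulAction.orbitRel B S₁)))
    (φ : (N × S₁) ≃ₜ (N × S₂))
    (f : S₁ → N) (g : S₁ → S₂) (hf : Continuous f) (hg : Continuous g)
    (hφ : ∀ (n : N) (s : S₁), φ (n, s) = (n * f s, g s))
    (hequiv : ∀ (n' : N) (b : B) (n : N) (s : S₁),
      φ (n' * n, b • s) = (n' * (φ (n, s)).1, b • (φ (n, s)).2)) :
    (∀ (b : B) (s : S₁), f (b • s) = f s) ∧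
    (∀ (b : B) (s : S₁), g (b • s) = b • g s) ∧
    (∃ Φ : unitInterval × S₁ → N, Continuous Φ ∧
      (∀ s, Φ (1, s) = f s) ∧ (∀ s, Φ (0, s) = 1) ∧
      (∀ (t : unitInterval) (b : B) (s : S₁), Φ (t, b • s) = Φ (t, s))) := by
  have key : ∀ (b : B) (s : S₁), f (b • s) = f s ∧ g (b • s) = b • g s := by
    intro b s
    have h1 := hequiv 1 b 1 s
    rw [one_mul, hφ 1 s] at h1
    have h2 := hφ 1 (b • s)
    rw [h1] at h2
    simp only [Prod.mk.injEq] at h2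
    constructor
    · have := h2.1
      simp only [one_mul] at this
      exact this.symm
    · exact h2.2.symm
  have hfB : ∀ (b : B) (s : S₁), f (b • s) = f s := fun b s => (key b s).1
  refine ⟨hfB, fun b s => (key b s).2, ?_⟩
  -- descend f to the quotient
  set Q := Quotient (MulAction.orbitRel B S₁) with hQ
  have hlift : ∀ a b : S₁, (MulAction.orbitRel B S₁).r a b → f a = f b := by
    intro a b hab
    obtain ⟨c, rfl⟩ := hab
    exact hfB c b
  let fbar : C(Q, N) := ⟨Quotient.lift f hlift, hf.quotient_lift hlift⟩
  -- f̄ is nullhomotopic since Q is contractible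
  obtain ⟨c, hc⟩ : fbar.Nullhomotopic := by
    have hid : (ContinuousMap.id Q).Nullhomotopic := id_nullhomotopic Q
    have : (fbar.comp (ContinuousMap.id Q)).Nullhomotopic := hid.comp_right fbar
    simpa using this
  obtain ⟨H2⟩ := hc
  -- path homotopy from const 1 to const c
  obtain ⟨γ⟩ := PathConnectedSpace.joined (1 : N) c
  let H1 : ContinuousMap.Homotopy (ContinuousMap.const Q (1 : N))
      (ContinuousMap.const Q c) :=
    { toFun := fun p => γ p.1
      continuous_toFun := γ.continuous.comp continuous_fst
      map_zero_left := fun q => γ.source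
      map_one_left := fun q => γ.target }
  let H := H1.trans H2.symm
  refine ⟨fun p => H (p.1, Quotient.mk _ p.2), ?_, ?_, ?_, ?_⟩
  · exact H.continuous.comp (continuous_fst.prodMk
      (continuous_quotient_mk'.comp continuous_snd))
  · intro s; exact H.apply_one (Quotient.mk _ s)
  · intro s; exact H.apply_zero (Quotient.mk _ s)
  · intro t b s
    have : (Quotient.mk (MulAction.orbitRel B S₁) (b • s)) = Quotient.mk _ s :=
      Quotient.sound ⟨b, rfl⟩
    show H (t, Quotient.mk _ (b • s)) = H (t, Quotient.mk _ s)
    rw [this]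
end
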